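/- Let x : Ω → ℝ^d be a random vector, (z^i)_{i∈ℕ} i.i.d. random vectors in ℝ^k independent of x, h : ℝ^d × ℝ^k → ℝ^m Borel measurable, and set v^i = h(x, z^i). Then for every Borel measurable γ : ℝ^m → ℝ^n and every bounded continuous g : ℝ^n × ℝ^m → ℝ, the averages (1/N) Σ_{i=1}^N g(γ(v^i), v^i) converge in L²(ℙ) (and hence in probability) to the conditional expectation E[g(γ(v¹), v¹) | σ(x)] as N → ∞. -/

import Mathlib

open MeasureTheory Filter ProbabilityTheory
open scoped ENNReal

section Aux

lemma integrable_of_abs_le {α : Type*} [MeasurableSpace α] (μ : Measure α) [IsFiniteMeasure μ]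
    {f : α → ℝ} (hf : AEStronglyMeasurable f μ) (B : ℝ) (hB : ∀ a, |f a| ≤ B) :
    Integrable f μ :=
  (memLp_top_of_bound hf B (Filter.Eventually.of_forall fun a => by
    simpa [Real.norm_eq_abs] using hB a)).integrable le_top

end Aux

theorem stmt19 {Ω : Type*} [MeasurableSpace Ω] (P : Measure Ω) [IsProbabilityMeasure P]
    (d k m n : ℕ)
    -- `x` a random vector, `(z^i)` i.i.d. independent of `x`, `v^i = h(x, z^i)`
    (x : Ω → (Fin d → ℝ)) (hx_meas : Measurable x)
    (z : ℕ → Ω → (Fin k → ℝ)) (hz_meas : ∀ i, Measurable (z i))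
    (hz_indep : iIndepFun z P)
    (hz_ident : ∀ i, Measure.map (z i) P = Measure.map (z 0) P)
    (hxz_indep : IndepFun x (fun ω => fun i => z i ω) P)
    (h : (Fin d → ℝ) → (Fin k → ℝ) → (Fin m → ℝ))
    (hh_meas : Measurable (fun p : (Fin d → ℝ) × (Fin k → ℝ) => h p.1 p.2))
    (v : ℕ → Ω → (Fin m → ℝ)) (hv_eq : ∀ i ω, v i ω = h (x ω) (z i ω))
    -- a Borel measurable `γ` and a bounded continuous test function `g`
    (γ : (Fin m → ℝ) → (Fin n → ℝ)) (hγ_meas : Measurable γ)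
    (g : (Fin n → ℝ) × (Fin m → ℝ) → ℝ) (hg_cont : Continuous g)
    (hg_bdd : ∃ C : ℝ, ∀ p, |g p| ≤ C) :
    -- then the empirical averages converge to `E[g(γ(v¹), v¹) | σ(x)]` in `L²(ℙ)` …
    Filter.Tendsto (fun N : ℕ => eLpNorm
      (fun ω => (N : ℝ)⁻¹ * ∑ i ∈ Finset.range N, g (γ (v i ω), v i ω) -
        (P[fun ω' => g (γ (v 0 ω'), v 0 ω')|MeasurableSpace.comap x inferInstance]) ω)
      2 P) Filter.atTop (nhds 0) ∧
    -- … and hence in probability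
    TendstoInMeasure P
      (fun (N : ℕ) ω => (N : ℝ)⁻¹ * ∑ i ∈ Finset.range N, g (γ (v i ω), v i ω))
      Filter.atTop
      (P[fun ω' => g (γ (v 0 ω'), v 0 ω')|MeasurableSpace.comap x inferInstance]) := by
  classical
  obtain ⟨C, hC⟩ := hg_bdd
  have hC0 : 0 ≤ C := (abs_nonneg _).trans (hC (0, 0))
  -- notation
  set F : (Fin d → ℝ) → (Fin k → ℝ) → ℝ := fun a b => g (γ (h a b), h a b) with hFdef
  have hF_meas : Measurable (Function.uncurry F) := by
    exact hg_cont.measurable.comp ((hγ_meas.comp hh_meas).prodMk hh_meas)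
  have hF_bdd : ∀ a b, |F a b| ≤ C := fun a b => hC _
  set ν : Measure (Fin k → ℝ) := P.map (z 0) with hνdef
  set νx : Measure (Fin d → ℝ) := P.map x with hνxdef
  haveI : IsProbabilityMeasure ν := Measure.isProbabilityMeasure_map (hz_meas 0).aemeasurable
  haveI : IsProbabilityMeasure νx := Measure.isProbabilityMeasure_map hx_meas.aemeasurable
  set φ : (Fin d → ℝ) → ℝ := fun a => ∫ b, F a b ∂ν with hφdef
  have hφ_sm : StronglyMeasurable φ :=
    hF_meas.stronglyMeasurable.integral_prod_right
  have hφ_bdd : ∀ a, |φ a| ≤ C := by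
    intro a
    calc |φ a| = ‖∫ b, F a b ∂ν‖ := by rw [Real.norm_eq_abs]
    _ ≤ C * (ν Set.univ).toReal := by
        refine norm_integral_le_of_norm_le_const (Filter.Eventually.of_forall fun b => ?_)
        simpa [Real.norm_eq_abs] using hF_bdd a b
    _ = C := by simp
  set Y : ℕ → Ω → ℝ := fun i ω => F (x ω) (z i ω) with hYdef
  have hY_meas : ∀ i, Measurable (Y i) := fun i =>
    hF_meas.comp (hx_meas.prodMk (hz_meas i))
  have hY_bdd : ∀ i ω, |Y i ω| ≤ C := fun i ω => hF_bdd _ _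
  have hm : MeasurableSpace.comap x inferInstance ≤ ‹MeasurableSpace Ω› := hx_meas.comap_le
  -- integrability helpers on Ω
  have hYint : ∀ i, Integrable (Y i) P := fun i =>
    integrable_of_abs_le P (hY_meas i).aestronglyMeasurable C (hY_bdd i)
  -- laws
  have hxzi : ∀ i, IndepFun x (z i) P := fun i => by
    have := hxz_indep.comp measurable_id (measurable_pi_apply i)
    exact this
  have hpair : ∀ i, P.map (fun ω => (x ω, z i ω)) = νx.prod ν := by
    intro i
    rw [(indepFun_iff_map_prod_eq_prod_map_map hx_meas.aemeasurable
      (hz_meas i).aemeasurable).mp (hxzi i), hz_ident i]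
  have htriple : ∀ i j, i ≠ j →
      P.map (fun ω => (x ω, (z i ω, z j ω))) = νx.prod (ν.prod ν) := by
    intro i j hij
    have hzz : IndepFun (z i) (z j) P := hz_indep.indepFun hij
    have hzzmap : P.map (fun ω => (z i ω, z j ω)) = ν.prod ν := by
      rw [(indepFun_iff_map_prod_eq_prod_map_map (hz_meas i).aemeasurable
        (hz_meas j).aemeasurable).mp hzz, hz_ident i, hz_ident j]
    have hxzz : IndepFun x (fun ω => (z i ω, z j ω)) P :=
      hxz_indep.comp measurable_id ((measurable_pi_apply i).prodMk (measurable_pi_apply j))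
    rw [(indepFun_iff_map_prod_eq_prod_map_map hx_meas.aemeasurable
      (((hz_meas i).prodMk (hz_meas j))).aemeasurable).mp hxzz, hzzmap]
  -- the conditional expectation is φ ∘ x
  have hFa_int : ∀ a, Integrable (fun b => F a b) ν := by
    intro a
    refine integrable_of_abs_le ν ?_ C (fun b => hF_bdd a b)
    exact (hF_meas.comp (measurable_const.prodMk measurable_id)).aestronglyMeasurable
  have hcond : (fun ω => φ (x ω)) =ᵐ[P] P[Y 0 | MeasurableSpace.comap x inferInstance] := by
    refine ae_eq_condExp_of_forall_setIntegral_eq hm (hYint 0) ?_ ?_ ?_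
    · intro s _ _
      exact (integrable_of_abs_le P
        ((hφ_sm.measurable.comp hx_meas).aestronglyMeasurable) C
        (fun ω => hφ_bdd (x ω))).integrableOn
    · rintro s ⟨t, ht, rfl⟩ -
      have h1 : ∫ ω in x ⁻¹' t, φ (x ω) ∂P = ∫ a in t, φ a ∂νx :=
        (setIntegral_map ht hφ_sm.aestronglyMeasurable hx_meas.aemeasurable).symm
      have hq : Measurable (fun ω => (x ω, z 0 ω)) := hx_meas.prodMk (hz_meas 0)
      have hpre : (fun ω => (x ω, z 0 ω)) ⁻¹' (t ×ˢ Set.univ) = x ⁻¹' t := by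
        ext ω; simp
      have h2 : ∫ ω in x ⁻¹' t, Y 0 ω ∂P
          = ∫ p in t ×ˢ Set.univ, Function.uncurry F p ∂(νx.prod ν) := by
        rw [← hpair 0, setIntegral_map (ht.prod MeasurableSet.univ)
          hF_meas.aestronglyMeasurable hq.aemeasurable, hpre]
        rfl
      have h3 : ∫ p in t ×ˢ Set.univ, Function.uncurry F p ∂(νx.prod ν)
          = ∫ a in t, φ a ∂νx := by
        rw [← Measure.restrict_prod_eq_prod_univ,
          integral_prod _ (integrable_of_abs_le _ hF_meas.aestronglyMeasurable C
            (fun p => hF_bdd p.1 p.2))]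
        rfl
      rw [h1, h2, h3]
    · refine StronglyMeasurable.aestronglyMeasurable ?_
      exact hφ_sm.comp_measurable (Measurable.of_comap_le le_rfl)

  -- deviations
  have habs2 : ∀ (u w C' : ℝ), |u| ≤ C' → |w| ≤ C' → |u - w| ≤ 2 * C' := by
    intro u w C' hu hw
    have hu' := abs_le.mp hu
    have hw' := abs_le.mp hw
    rw [abs_le]
    constructor <;> linarith [hu'.1, hu'.2, hw'.1, hw'.2]
  set W : ℕ → Ω → ℝ := fun i ω => Y i ω - φ (x ω) with hWdef
  have hW_meas : ∀ i, Measurable (W i) := fun i =>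
    (hY_meas i).sub (hφ_sm.measurable.comp hx_meas)
  have hW_bdd : ∀ i ω, |W i ω| ≤ 2 * C := fun i ω =>
    habs2 _ _ _ (hY_bdd i ω) (hφ_bdd (x ω))
  have hWWint : ∀ i j, Integrable (fun ω => W i ω * W j ω) P := by
    intro i j
    refine integrable_of_abs_le P ((hW_meas i).mul (hW_meas j)).aestronglyMeasurable
      ((2*C)*(2*C)) (fun ω => ?_)
    rw [abs_mul]
    exact mul_le_mul (hW_bdd i ω) (hW_bdd j ω) (abs_nonneg _) (by positivity)
  -- cross terms vanish
  have hcross : ∀ i j, i ≠ j → ∫ ω, W i ω * W j ω ∂P = 0 := by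
    intro i j hij
    set G : (Fin d → ℝ) × ((Fin k → ℝ) × (Fin k → ℝ)) → ℝ :=
      fun p => (F p.1 p.2.1 - φ p.1) * (F p.1 p.2.2 - φ p.1) with hGdef
    have hG1 : Measurable fun p : (Fin d → ℝ) × ((Fin k → ℝ) × (Fin k → ℝ)) => F p.1 p.2.1 :=
      hF_meas.comp (measurable_fst.prodMk (measurable_fst.comp measurable_snd))
    have hG2 : Measurable fun p : (Fin d → ℝ) × ((Fin k → ℝ) × (Fin k → ℝ)) => F p.1 p.2.2 :=
      hF_meas.comp (measurable_fst.prodMk (measurable_snd.comp measurable_snd))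
    have hG_meas : Measurable G :=
      (hG1.sub (hφ_sm.measurable.comp measurable_fst)).mul
        (hG2.sub (hφ_sm.measurable.comp measurable_fst))
    have hGbdd : ∀ p, |G p| ≤ (2*C)*(2*C) := by
      intro p
      rw [hGdef]
      dsimp only
      rw [abs_mul]
      exact mul_le_mul (habs2 _ _ _ (hF_bdd _ _) (hφ_bdd _))
        (habs2 _ _ _ (hF_bdd _ _) (hφ_bdd _)) (abs_nonneg _) (by positivity)
    have hGint : Integrable G (νx.prod (ν.prod ν)) :=
      integrable_of_abs_le _ hG_meas.aestronglyMeasurable _ hGbdd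
    have hT : Measurable fun ω => (x ω, (z i ω, z j ω)) :=
      hx_meas.prodMk ((hz_meas i).prodMk (hz_meas j))
    have h0 : ∫ ω, W i ω * W j ω ∂P = ∫ p, G p ∂(νx.prod (ν.prod ν)) := by
      rw [← htriple i j hij, integral_map hT.aemeasurable hG_meas.aestronglyMeasurable]
    rw [h0, integral_prod _ hGint]
    have hinner : ∀ a, ∫ q, G (a, q) ∂(ν.prod ν) = 0 := by
      intro a
      have hmul : ∫ q : (Fin k → ℝ) × (Fin k → ℝ),
          (fun b => F a b - φ a) q.1 * (fun c => F a c - φ a) q.2 ∂(ν.prod ν)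
          = (∫ b, (F a b - φ a) ∂ν) * (∫ c, (F a c - φ a) ∂ν) :=
        integral_prod_mul (fun b => F a b - φ a) (fun c => F a c - φ a)
      have hz0 : ∫ b, (F a b - φ a) ∂ν = 0 := by
        rw [integral_sub (hFa_int a) (integrable_const _), integral_const]
        simp [hφdef]
      simpa [hz0] using hmul
    calc ∫ a, ∫ q, G (a, q) ∂(ν.prod ν) ∂νx
        = ∫ _a, (0:ℝ) ∂νx := integral_congr_ae (Filter.Eventually.of_forall fun a => hinner a)
      _ = 0 := by simp
  -- the variance bound
  have hkey : ∀ N : ℕ, 1 ≤ N →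
      ∫ ω, ((N:ℝ)⁻¹ * ∑ i ∈ Finset.range N, Y i ω - φ (x ω))^2 ∂P ≤ 4 * C^2 / N := by
    intro N hN
    have hNne : (N:ℝ) ≠ 0 := Nat.cast_ne_zero.mpr (Nat.one_le_iff_ne_zero.mp hN)
    have hDW : ∀ ω, (N:ℝ)⁻¹ * ∑ i ∈ Finset.range N, Y i ω - φ (x ω)
        = (N:ℝ)⁻¹ * ∑ i ∈ Finset.range N, W i ω := by
      intro ω
      simp only [hWdef, Finset.sum_sub_distrib, Finset.sum_const, Finset.card_range,
        nsmul_eq_mul, mul_sub]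
      rw [← mul_assoc, inv_mul_cancel₀ hNne, one_mul]
    calc ∫ ω, ((N:ℝ)⁻¹ * ∑ i ∈ Finset.range N, Y i ω - φ (x ω))^2 ∂P
        = ((N:ℝ)⁻¹)^2 * ∫ ω, (∑ i ∈ Finset.range N, W i ω)^2 ∂P := by
          rw [← integral_const_mul]
          exact integral_congr_ae (Filter.Eventually.of_forall fun ω => by
            dsimp only
            rw [hDW ω, mul_pow])
      _ = ((N:ℝ)⁻¹)^2 * ∑ i ∈ Finset.range N, ∑ j ∈ Finset.range N, ∫ ω, W i ω * W j ω ∂P := by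
          congr 1
          calc ∫ ω, (∑ i ∈ Finset.range N, W i ω)^2 ∂P
              = ∫ ω, ∑ i ∈ Finset.range N, ∑ j ∈ Finset.range N, W i ω * W j ω ∂P :=
                integral_congr_ae (Filter.Eventually.of_forall fun ω => by
                  dsimp only
                  rw [sq, Finset.sum_mul_sum])
            _ = ∑ i ∈ Finset.range N, ∑ j ∈ Finset.range N, ∫ ω, W i ω * W j ω ∂P := by
                rw [integral_finset_sum _
                  (fun i _ => integrable_finset_sum _ (fun j _ => hWWint i j))]
                exact Finset.sum_congr rfl fun i _ =>
                  integral_finset_sum _ fun j _ => hWWint i j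
      _ = ((N:ℝ)⁻¹)^2 * ∑ i ∈ Finset.range N, ∫ ω, W i ω * W i ω ∂P := by
          congr 1
          refine Finset.sum_congr rfl fun i hi => ?_
          exact Finset.sum_eq_single_of_mem i hi (fun j _ hji => hcross i j (Ne.symm hji))
      _ ≤ ((N:ℝ)⁻¹)^2 * ((N:ℝ) * (4 * C^2)) := by
          refine mul_le_mul_of_nonneg_left ?_ (by positivity)
          calc ∑ i ∈ Finset.range N, ∫ ω, W i ω * W i ω ∂P
              ≤ ∑ _i ∈ Finset.range N, (4 * C^2) := by
                refine Finset.sum_le_sum fun i _ => ?_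
                calc ∫ ω, W i ω * W i ω ∂P ≤ ∫ _ω, ((2*C)*(2*C)) ∂P := by
                      refine integral_mono (hWWint i i) (integrable_const _) fun ω => ?_
                      rw [← abs_mul_abs_self]
                      exact mul_le_mul (hW_bdd i ω) (hW_bdd i ω) (abs_nonneg _) (by positivity)
                  _ = (2*C)*(2*C) := by simp
                  _ = 4 * C^2 := by ring
            _ = (N:ℝ) * (4 * C^2) := by
                rw [Finset.sum_const, Finset.card_range, nsmul_eq_mul]
      _ = 4 * C^2 / N := by
          field_simp
  -- Memℒp
  have hD_meas : ∀ N : ℕ,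
      Measurable fun ω => (N:ℝ)⁻¹ * ∑ i ∈ Finset.range N, Y i ω - φ (x ω) := fun N =>
    ((Finset.measurable_sum _ (fun i _ => hY_meas i)).const_mul _).sub
      (hφ_sm.measurable.comp hx_meas)
  have havg_bdd : ∀ (N : ℕ) (ω : Ω), |(N:ℝ)⁻¹ * ∑ i ∈ Finset.range N, Y i ω| ≤ C := by
    intro N ω
    rcases Nat.eq_zero_or_pos N with h0 | h0
    · simp [h0, hC0]
    have hNne : (N:ℝ) ≠ 0 := Nat.cast_ne_zero.mpr h0.ne'
    rw [abs_mul, abs_inv, Nat.abs_cast]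
    calc (N:ℝ)⁻¹ * |∑ i ∈ Finset.range N, Y i ω| ≤ (N:ℝ)⁻¹ * ((N:ℝ) * C) := by
          refine mul_le_mul_of_nonneg_left ?_ (by positivity)
          refine (Finset.abs_sum_le_sum_abs _ _).trans ?_
          calc ∑ i ∈ Finset.range N, |Y i ω| ≤ ∑ _i ∈ Finset.range N, C :=
                Finset.sum_le_sum fun i _ => hY_bdd i ω
            _ = (N:ℝ) * C := by rw [Finset.sum_const, Finset.card_range, nsmul_eq_mul]
      _ = C := by rw [← mul_assoc, inv_mul_cancel₀ hNne, one_mul]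
  have hmem : ∀ N : ℕ,
      MemLp (fun ω => (N:ℝ)⁻¹ * ∑ i ∈ Finset.range N, Y i ω - φ (x ω)) 2 P := by
    intro N
    refine (memLp_top_of_bound (hD_meas N).aestronglyMeasurable (2*C)
      (Filter.Eventually.of_forall fun ω => ?_)).mono_exponent le_top
    rw [Real.norm_eq_abs]
    exact habs2 _ _ _ (havg_bdd N ω) (hφ_bdd (x ω))
  -- eLpNorm bound
  have hbound : ∀ N : ℕ, 1 ≤ N →
      eLpNorm (fun ω => (N:ℝ)⁻¹ * ∑ i ∈ Finset.range N, Y i ω - φ (x ω)) 2 P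
        ≤ ENNReal.ofReal (Real.sqrt (4 * C^2 / N)) := by
    intro N hN
    rw [(hmem N).eLpNorm_eq_integral_rpow_norm (by norm_num) (by norm_num)]
    refine ENNReal.ofReal_le_ofReal ?_
    have h2 : (2:ℝ≥0∞).toReal = 2 := by norm_num
    rw [h2, Real.sqrt_eq_rpow, one_div]
    have hinteq : ∫ ω, ‖(N:ℝ)⁻¹ * ∑ i ∈ Finset.range N, Y i ω - φ (x ω)‖ ^ (2:ℝ) ∂P
        = ∫ ω, ((N:ℝ)⁻¹ * ∑ i ∈ Finset.range N, Y i ω - φ (x ω))^2 ∂P :=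
      integral_congr_ae (Filter.Eventually.of_forall fun ω => by
        dsimp only
        rw [Real.rpow_two, Real.norm_eq_abs, sq_abs])
    rw [hinteq]
    exact Real.rpow_le_rpow (integral_nonneg fun ω => sq_nonneg _) (hkey N hN) (by norm_num)
  have hupper : Tendsto (fun N : ℕ => ENNReal.ofReal (Real.sqrt (4 * C^2 / N)))
      atTop (nhds 0) := by
    have h1 : Tendsto (fun N : ℕ => 4 * C^2 / (N:ℝ)) atTop (nhds 0) :=
      tendsto_const_div_atTop_nhds_zero_nat _
    have h2 : Tendsto (fun N : ℕ => Real.sqrt (4 * C^2 / N)) atTop (nhds 0) := by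
      have hcmp := (Real.continuous_sqrt.tendsto 0).comp h1
      rw [Real.sqrt_zero] at hcmp
      exact hcmp
    have h3 := (ENNReal.continuous_ofReal.tendsto 0).comp h2
    rw [ENNReal.ofReal_zero] at h3
    exact h3
  have hae : ∀ N : ℕ,
      eLpNorm (fun ω => (N:ℝ)⁻¹ * ∑ i ∈ Finset.range N, Y i ω -
        (P[Y 0 | MeasurableSpace.comap x inferInstance]) ω) 2 P
      = eLpNorm (fun ω => (N:ℝ)⁻¹ * ∑ i ∈ Finset.range N, Y i ω - φ (x ω)) 2 P := by
    intro N
    refine eLpNorm_congr_ae ?_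
    filter_upwards [hcond] with ω hω
    rw [← hω]
  have hL2 : Tendsto (fun N : ℕ => eLpNorm
      (fun ω => (N:ℝ)⁻¹ * ∑ i ∈ Finset.range N, Y i ω -
        (P[Y 0 | MeasurableSpace.comap x inferInstance]) ω) 2 P) atTop (nhds 0) := by
    refine tendsto_of_tendsto_of_tendsto_of_le_of_le' tendsto_const_nhds hupper
      (Filter.Eventually.of_forall fun N => zero_le) ?_
    filter_upwards [eventually_ge_atTop 1] with N hN
    rw [hae N]
    exact hbound N hN
  -- translate back to the original statement
  have hEq0 : (fun ω' => g (γ (v 0 ω'), v 0 ω')) = Y 0 := funext fun ω => by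
    simp only [hYdef, hFdef, hv_eq]
  have hfun : ∀ N : ℕ,
      (fun ω => (N : ℝ)⁻¹ * ∑ i ∈ Finset.range N, g (γ (v i ω), v i ω) -
        (P[fun ω' => g (γ (v 0 ω'), v 0 ω')|MeasurableSpace.comap x inferInstance]) ω)
      = fun ω => (N:ℝ)⁻¹ * ∑ i ∈ Finset.range N, Y i ω -
        (P[Y 0 | MeasurableSpace.comap x inferInstance]) ω := by
    intro N
    funext ω
    rw [hEq0]
    congr 2
    exact Finset.sum_congr rfl fun i _ => by simp only [hYdef, hFdef, hv_eq]
  constructor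
  · simpa only [hfun] using hL2
  · have hgmeas : AEStronglyMeasurable
        (P[fun ω' => g (γ (v 0 ω'), v 0 ω')|MeasurableSpace.comap x inferInstance]) P :=
      (stronglyMeasurable_condExp.mono hm).aestronglyMeasurable
    refine tendstoInMeasure_of_tendsto_eLpNorm (p := 2) (by norm_num) (fun N => ?_) hgmeas ?_
    · have : Measurable fun ω => (N:ℝ)⁻¹ * ∑ i ∈ Finset.range N, g (γ (v i ω), v i ω) := by
        refine Measurable.const_mul (Finset.measurable_sum _ (fun i _ => ?_)) _
        have : (fun ω => g (γ (v i ω), v i ω)) = Y i := funext fun ω => by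
          simp only [hYdef, hFdef, hv_eq]
        rw [this]
        exact hY_meas i
      exact this.aestronglyMeasurable
    · have heq : ∀ N : ℕ,
          ((fun ω => (N:ℝ)⁻¹ * ∑ i ∈ Finset.range N, g (γ (v i ω), v i ω)) -
            P[fun ω' => g (γ (v 0 ω'), v 0 ω')|MeasurableSpace.comap x inferInstance])
          = fun ω => (N:ℝ)⁻¹ * ∑ i ∈ Finset.range N, Y i ω -
            (P[Y 0 | MeasurableSpace.comap x inferInstance]) ω := by
        intro N
        funext ω
        rw [Pi.sub_apply, hEq0]
        congr 2
        exact Finset.sum_congr rfl fun i _ => by simp only [hYdef, hFdef, hv_eq]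
      simpa only [heq] using hL2
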